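/- Let f : ℝ^m → ℝ be a convex differentiable function whose gradient ∇f is Lipschitz continuous with Lipschitz constant 1/β for some β > 0. Then for all x, y ∈ ℝ^m, ⟨∇f(x) − ∇f(y), x − y⟩ ≥ β ‖∇f(x) − ∇f(y)‖². -/

import Mathlib

open scoped RealInnerProductSpace

section aux
variable {m : ℕ}
local notation "E" => EuclideanSpace ℝ (Fin m)

lemma line_hasDerivAt (f : E → ℝ) (hdiff : Differentiable ℝ f)
    (x v : E) (t : ℝ) :
    HasDerivAt (fun s : ℝ => f (x + s • v)) ⟪gradient f (x + t • v), v⟫ t := by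
  have h1 : HasGradientAt f (gradient f (x + t • v)) (x + t • v) :=
    (hdiff _).hasGradientAt
  rw [hasGradientAt_iff_hasFDerivAt] at h1
  have h2 : HasDerivAt (fun s : ℝ => x + s • v) v t := by
    simpa using ((hasDerivAt_id t).smul_const v).const_add x
  have h3 := h1.comp_hasDerivAt t h2
  simpa [InnerProductSpace.toDual_apply_apply, Function.comp_def] using h3

/-- Gradient inequality for convex functions. -/
lemma grad_ineq (f : E → ℝ) (hconv : ConvexOn ℝ Set.univ f)
    (hdiff : Differentiable ℝ f) (x y : E) :
    f x + ⟪gradient f x, y - x⟫ ≤ f y := by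
  set v := y - x with hv
  have hg : ConvexOn ℝ Set.univ (fun s : ℝ => f (x + s • v)) := by
    have h := hconv.comp_affineMap (AffineMap.lineMap x y : ℝ →ᵃ[ℝ] E)
    have heq : (fun s : ℝ => f (x + s • v)) = f ∘ (AffineMap.lineMap x y : ℝ →ᵃ[ℝ] E) := by
      funext s
      simp only [Function.comp_apply, AffineMap.lineMap_apply_module, hv]
      congr 1
      module
    rw [heq]
    simpa using h
  have hd := line_hasDerivAt f hdiff x v 0
  simp only [zero_smul, add_zero] at hd
  have hslope := hg.le_slope_of_hasDerivAt (Set.mem_univ (0:ℝ)) (Set.mem_univ (1:ℝ))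
    one_pos hd
  rw [slope_def_field] at hslope
  simp only [zero_smul, add_zero, one_smul] at hslope
  have hxy : x + v = y := by rw [hv]; abel
  rw [hxy] at hslope
  have h0 : (f y - f x) / (1 - 0) = f y - f x := by norm_num
  rw [h0] at hslope
  linarith

/-- Descent lemma. -/
lemma descent (f : E → ℝ) (hdiff : Differentiable ℝ f) (β : ℝ) (hβ : 0 < β)
    (hlip : ∀ x y : E, ‖gradient f x - gradient f y‖ ≤ (1 / β) * ‖x - y‖)
    (x y : E) :
    f y ≤ f x + ⟪gradient f x, y - x⟫ + (1 / (2 * β)) * ‖y - x‖ ^ 2 := by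
  set v := y - x with hv
  set g : ℝ → ℝ := fun s => f (x + s • v) with hg
  set B : ℝ → ℝ := fun s => f x + s * ⟪gradient f x, v⟫ + s ^ 2 / (2 * β) * ‖v‖ ^ 2 with hB
  have key : ∀ t ∈ Set.Icc (0:ℝ) 1, g t ≤ B t := by
    refine image_le_of_deriv_right_le_deriv_boundary
      (f := g) (f' := fun t => ⟪gradient f (x + t • v), v⟫)
      (B := B) (B' := fun t => ⟪gradient f x, v⟫ + t / β * ‖v‖ ^ 2)
      ?_ ?_ ?_ ?_ ?_ ?_
    · exact fun t _ => (line_hasDerivAt f hdiff x v t).continuousAt.continuousWithinAt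
    · exact fun t _ => (line_hasDerivAt f hdiff x v t).hasDerivWithinAt
    · simp [hg, hB]
    · have : Continuous B := by
        rw [hB]; fun_prop
      exact this.continuousOn
    · intro t _
      apply HasDerivAt.hasDerivWithinAt
      have h1 : HasDerivAt (fun s : ℝ => s ^ 2 / (2*β) * ‖v‖^2) ((2 * t ^ 1) / (2*β) * ‖v‖^2) t :=
        ((hasDerivAt_pow 2 t).div_const (2*β)).mul_const (‖v‖^2)
      have h2 : HasDerivAt (fun s : ℝ => s * ⟪gradient f x, v⟫) ⟪gradient f x, v⟫ t := by
        simpa using (hasDerivAt_id t).mul_const ⟪gradient f x, v⟫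
      have h3 := ((hasDerivAt_const t (f x)).add h2).add h1
      convert h3 using 1
      · rfl
      · ring
    · intro t ht
      have h1 : ⟪gradient f (x + t • v) - gradient f x, v⟫ ≤ t / β * ‖v‖ ^ 2 := by
        calc ⟪gradient f (x + t • v) - gradient f x, v⟫
            ≤ ‖gradient f (x + t • v) - gradient f x‖ * ‖v‖ := real_inner_le_norm _ _
          _ ≤ ((1 / β) * ‖(x + t • v) - x‖) * ‖v‖ := by
              have := hlip (x + t • v) x
              exact mul_le_mul_of_nonneg_right this (norm_nonneg _)
          _ = t / β * ‖v‖ ^ 2 := by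
              have : ‖(x + t • v) - x‖ = t * ‖v‖ := by
                rw [add_sub_cancel_left, norm_smul, Real.norm_eq_abs, abs_of_nonneg ht.1]
              rw [this]; ring
      have h2 : ⟪gradient f (x + t • v) - gradient f x, v⟫
          = ⟪gradient f (x + t • v), v⟫ - ⟪gradient f x, v⟫ := inner_sub_left _ _ _
      linarith
  have hk := key 1 (by norm_num)
  simp only [hg, hB, one_smul, one_pow, one_mul] at hk
  have hxy : x + v = y := by rw [hv]; abel
  rw [hxy] at hk
  exact hk

/-- One-sided cocoercivity estimate. -/
lemma onesided (f : E → ℝ) (hconv : ConvexOn ℝ Set.univ f)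
    (hdiff : Differentiable ℝ f) (β : ℝ) (hβ : 0 < β)
    (hlip : ∀ x y : E, ‖gradient f x - gradient f y‖ ≤ (1 / β) * ‖x - y‖)
    (x y : E) :
    f x + ⟪gradient f x, y - x⟫ + (β / 2) * ‖gradient f y - gradient f x‖ ^ 2 ≤ f y := by
  set u := gradient f y - gradient f x with hu
  set z := y - β • u with hz
  have hd := descent f hdiff β hβ hlip y z
  have hgi := grad_ineq f hconv hdiff x z
  have hzy : z - y = -(β • u) := by rw [hz]; abel
  have hnorm : ‖z - y‖ ^ 2 = β ^ 2 * ‖u‖ ^ 2 := by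
    rw [hzy, norm_neg, norm_smul, Real.norm_eq_abs, abs_of_pos hβ, mul_pow]
  have hin1 : ⟪gradient f y, z - y⟫ = -(β * ⟪gradient f y, u⟫) := by
    rw [hzy, inner_neg_right, real_inner_smul_right]
  have hin2 : ⟪gradient f x, z - x⟫ = ⟪gradient f x, y - x⟫ - β * ⟪gradient f x, u⟫ := by
    have h : z - x = (y - x) - β • u := by rw [hz]; abel
    rw [h, inner_sub_right, real_inner_smul_right]
  rw [hnorm, hin1] at hd
  rw [hin2] at hgi
  have huu : ⟪gradient f y, u⟫ - ⟪gradient f x, u⟫ = ‖u‖ ^ 2 := by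
    rw [← inner_sub_left, ← hu, real_inner_self_eq_norm_sq]
  have hsimp : 1 / (2 * β) * (β ^ 2 * ‖u‖ ^ 2) = β / 2 * ‖u‖ ^ 2 := by
    field_simp
  rw [hsimp] at hd
  have huub : β * ⟪gradient f y, u⟫ - β * ⟪gradient f x, u⟫ = β * ‖u‖ ^ 2 := by
    rw [← mul_sub, huu]
  linarith

end aux

theorem stmt5 (m : ℕ) (f : EuclideanSpace ℝ (Fin m) → ℝ)
    (hconv : ConvexOn ℝ Set.univ f) (hdiff : Differentiable ℝ f)
    (β : ℝ) (hβ : 0 < β)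
    (hlip : ∀ x y : EuclideanSpace ℝ (Fin m),
      ‖gradient f x - gradient f y‖ ≤ (1 / β) * ‖x - y‖) :
    ∀ x y : EuclideanSpace ℝ (Fin m),
      β * ‖gradient f x - gradient f y‖ ^ 2 ≤ ⟪gradient f x - gradient f y, x - y⟫ := by
  intro x y
  have h1 := onesided f hconv hdiff β hβ hlip x y
  have h2 := onesided f hconv hdiff β hβ hlip y x
  have hn : ‖gradient f x - gradient f y‖ ^ 2 = ‖gradient f y - gradient f x‖ ^ 2 := by
    rw [← norm_neg (gradient f x - gradient f y)]; congr 2; abel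
  have hi1 : ⟪gradient f x - gradient f y, x - y⟫
      = ⟪gradient f x, x - y⟫ - ⟪gradient f y, x - y⟫ := inner_sub_left _ _ _
  have hi2 : ⟪gradient f x, y - x⟫ = -⟪gradient f x, x - y⟫ := by
    rw [← inner_neg_right]; congr 1; abel
  rw [hi1]
  rw [hi2] at h1
  rw [← hn] at h1
  linarith
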